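/- Let G be a group, H a subgroup, and G₁,…,Gₙ subgroups of G distinct from H such that the index of H ∩ Gᵢ in H is infinite for every i. Then for any elements h, g₁,…,gₙ ∈ G, the coset hH is not contained in the union ⋃ᵢ gᵢ(H ∩ Gᵢ). -/

import Mathlib

open Pointwise

/-- Lemma 5.5: if `H` and the `Gᵢ` are subgroups with `H ≠ Gᵢ` and the index of
`H ⊓ Gᵢ` in `H` infinite (index `0` in Mathlib's convention), then no left coset
`h • H` is contained in a finite union of left cosets `gᵢ • (H ⊓ Gᵢ)`. -/
theorem coset_not_subset_union_of_infinite_index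
    {G : Type*} [Group G] (H : Subgroup G) (n : ℕ) (Gs : Fin n → Subgroup G)
    (hne : ∀ i, Gs i ≠ H)
    (hinf : ∀ i, (H ⊓ Gs i).relIndex H = 0)
    (h : G) (g : Fin n → G) :
    ¬ (h • (H : Set G) ⊆ ⋃ i, g i • ((H ⊓ Gs i : Subgroup G) : Set G)) := by
  classical
  intro hsub
  -- translate by h⁻¹ : H is covered by the cosets (h⁻¹ * g i) • (H ⊓ Gs i)
  have hsub' : (H : Set G) ⊆ ⋃ i, (h⁻¹ * g i) • ((H ⊓ Gs i : Subgroup G) : Set G) := by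
    intro x hx
    have hx' : h * x ∈ h • (H : Set G) := ⟨x, hx, rfl⟩
    obtain ⟨i, hi⟩ := Set.mem_iUnion.mp (hsub hx')
    rw [mem_leftCoset_iff] at hi
    refine Set.mem_iUnion.mpr ⟨i, ?_⟩
    rw [mem_leftCoset_iff, mul_inv_rev, inv_inv]
    simpa [mul_assoc] using hi
  -- indices whose translated coset meets H
  set s : Finset (Fin n) :=
    Finset.univ.filter (fun i => ∃ a, a ∈ H ∧ a ∈ (h⁻¹ * g i) • ((H ⊓ Gs i : Subgroup G) : Set G))
    with hs
  have hmem : ∀ i ∈ s, ∃ a, a ∈ H ∧ a ∈ (h⁻¹ * g i) • ((H ⊓ Gs i : Subgroup G) : Set G) := by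
    intro i hi
    exact (Finset.mem_filter.mp hi).2
  choose a ha₁ ha₂ using hmem
  -- representatives as elements of H
  let k : ∀ i ∈ s, H := fun i hi => ⟨a i hi, ha₁ i hi⟩
  -- cover of the group H by cosets of subgroupOf
  have hcover : ⋃ i ∈ s, ⋃ (hi : i ∈ s),
      (⟨a i hi, ha₁ i hi⟩ : H) • (((H ⊓ Gs i).subgroupOf H : Subgroup H) : Set H)
      = Set.univ := by
    ext x
    simp only [Set.mem_univ, iff_true, Set.mem_iUnion]
    obtain ⟨i, hix⟩ := Set.mem_iUnion.mp (hsub' x.2)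
    have hiS : i ∈ s := by
      rw [hs, Finset.mem_filter]
      exact ⟨Finset.mem_univ i, x.1, x.2, hix⟩
    refine ⟨i, hiS, hiS, ?_⟩
    rw [mem_leftCoset_iff, SetLike.mem_coe, Subgroup.mem_subgroupOf]
    -- need a⁻¹ * x ∈ H ⊓ Gs i
    have h1 : (h⁻¹ * g i)⁻¹ * x ∈ H ⊓ Gs i := by
      have := hix; rwa [mem_leftCoset_iff, SetLike.mem_coe] at this
    have h2 : (h⁻¹ * g i)⁻¹ * a i hiS ∈ H ⊓ Gs i := by
      have := ha₂ i hiS; rwa [mem_leftCoset_iff, SetLike.mem_coe] at this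
    have : ((⟨a i hiS, ha₁ i hiS⟩ : H)⁻¹ * x : H).1
        = ((h⁻¹ * g i)⁻¹ * a i hiS)⁻¹ * ((h⁻¹ * g i)⁻¹ * x) := by
      simp [mul_assoc]
    rw [this]
    exact mul_mem (inv_mem h2) h1
  -- apply B.H. Neumann's lemma inside H
  have hcover' : ⋃ i ∈ s.attach, (⟨a i.1 i.2, ha₁ i.1 i.2⟩ : H) •
      (((H ⊓ Gs i.1).subgroupOf H : Subgroup H) : Set H) = Set.univ := by
    rw [← hcover]
    ext x
    simp only [Set.mem_iUnion]
    constructor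
    · rintro ⟨⟨i, hi⟩, h1, hx⟩
      exact ⟨i, hi, hi, hx⟩
    · rintro ⟨i, hi1, hi2, hx⟩
      exact ⟨⟨i, hi1⟩, s.mem_attach _, hx⟩
  obtain ⟨⟨i, hi⟩, -, hfin⟩ := Subgroup.exists_finiteIndex_of_leftCoset_cover hcover'
  exact hfin.index_ne_zero (hinf i)
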